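/- Let U₀ be a unitary operator on a separable Hilbert space 𝓗, let Y be a trace class operator, and let {Q(t,s)}_{t,s∈ℕ} be a family of bounded operators with sup_{t,s}‖Q(t,s)‖ < ∞. For t, s ∈ ℕ define Z_{t,s}(A) = Σ_{k=0}^∞ U₀^{−k−t} A U₀^{k+s}. Then for every ψ in 𝓗_{ac,0} (vectors with absolutely continuous U₀-spectral measure whose density G_ψ² satisfies G_ψ ∈ L² ∩ L^∞), lim_{t,s→∞} ⟨ψ, Z_{t,s}(Q(t,s)·Y) ψ⟩ = 0. -/

import Mathlib

noncomputable section
open MeasureTheory Filter Topology Complex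

/-- A bounded operator on a Hilbert space is trace class iff it admits a nuclear
representation `T = ∑ₙ |aₙ⟩⟨bₙ|` with `∑ₙ ‖aₙ‖‖bₙ‖ < ∞` (in a Hilbert space this is
equivalent to `Tr |T| < ∞`). -/
def IsTraceClass {E : Type*} [NormedAddCommGroup E] [InnerProductSpace ℂ E]
    (T : E →L[ℂ] E) : Prop :=
  ∃ a b : ℕ → E, Summable (fun n => ‖a n‖ * ‖b n‖) ∧
    ∀ ψ, T ψ = ∑' n, (inner ℂ (b n) ψ : ℂ) • a n

/-- `μ` is the spectral measure of the unitary `U` at the vector `ψ`, i.e. the finite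
Borel measure on `[0,2π)` with `⟨ψ, Uᵗψ⟩ = ∫ e^{itλ} dμ(λ)` for all `t ∈ ℤ`. -/
def IsVectorSpectralMeasure {E : Type*} [NormedAddCommGroup E] [InnerProductSpace ℂ E]
    [CompleteSpace E] (U : unitary (E →L[ℂ] E)) (ψ : E) (μ : Measure ℝ) : Prop :=
  IsFiniteMeasure μ ∧ μ (Set.Ico 0 (2 * Real.pi))ᶜ = 0 ∧
    ∀ t : ℤ, (inner ℂ ψ (((U ^ t : unitary (E →L[ℂ] E)) : E →L[ℂ] E) ψ) : ℂ)
      = ∫ l, Complex.exp (Complex.I * t * l) ∂μ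

/-- `ψ ∈ 𝓗_{ac,0}`: the spectral measure of `ψ` has a bounded density `G_ψ²`
(equivalently, `G_ψ ∈ L² ∩ L^∞`, the `L²` condition being automatic). -/
def IsAc0Vector {E : Type*} [NormedAddCommGroup E] [InnerProductSpace ℂ E]
    [CompleteSpace E] (U : unitary (E →L[ℂ] E)) (ψ : E) : Prop :=
  ∃ (μ : Measure ℝ) (C : NNReal), IsVectorSpectralMeasure U ψ μ ∧ μ ≤ C • volume
section ZHelpers
open ENNReal
variable {E : Type*} [NormedAddCommGroup E] [InnerProductSpace ℂ E] [CompleteSpace E]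

def uop (U0 : unitary (E →L[ℂ] E)) (a : ℤ) : E →L[ℂ] E :=
  ((U0 ^ a : unitary (E →L[ℂ] E)) : E →L[ℂ] E)

lemma uop_apply_add (U0 : unitary (E →L[ℂ] E)) (a b : ℤ) (x : E) :
    uop U0 (a + b) x = uop U0 a (uop U0 b x) := by
  simp only [uop, zpow_add]; rfl

lemma inner_uop (U0 : unitary (E →L[ℂ] E)) (a b : ℤ) (x y : E) :
    (inner ℂ (uop U0 a x) (uop U0 b y) : ℂ) = inner ℂ x (uop U0 (b - a) y) := by
  have h : uop U0 b y = uop U0 a (uop U0 (b - a) y) := by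
    rw [← uop_apply_add, show a + (b - a) = b by ring]
  rw [h]
  exact Unitary.inner_map_map (U0 ^ a) _ _

lemma norm_exp_int_mul (t : ℤ) (x : ℝ) : ‖Complex.exp (Complex.I * t * x)‖ = 1 := by
  rw [Complex.norm_exp]
  simp [Complex.mul_re]

lemma integrable_exp_int (ν : Measure ℝ) [IsFiniteMeasure ν] (t : ℤ) :
    Integrable (fun l : ℝ => Complex.exp (Complex.I * t * l)) ν := by
  refine (integrable_const (1 : ℝ)).mono' ?_ ?_
  · exact (Complex.continuous_exp.comp (by fun_prop)).aestronglyMeasurable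
  · exact ae_of_all _ fun x => le_of_eq (norm_exp_int_mul t x)

/-- double sum of spectral integrals equals integral of `‖p‖²`. -/

lemma sum_integral_exp (ν : Measure ℝ) [IsFiniteMeasure ν] (F : Finset ℤ) (c : ℤ → ℂ) :
    ∑ k ∈ F, ∑ l ∈ F, (starRingEnd ℂ) (c k) * c l
        * ∫ x, Complex.exp (Complex.I * (l - k) * x) ∂ν
      = ((∫ x, ‖∑ k ∈ F, c k * Complex.exp (Complex.I * k * x)‖ ^ 2 ∂ν : ℝ) : ℂ) := by
  have hre : ∀ x : ℝ, ((‖∑ k ∈ F, c k * Complex.exp (Complex.I * k * x)‖ ^ 2 : ℝ) : ℂ)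
      = ∑ k ∈ F, ∑ l ∈ F, (starRingEnd ℂ) (c k) * c l
          * Complex.exp (Complex.I * (l - k) * x) := by
    intro x
    have h1 : ((‖∑ k ∈ F, c k * Complex.exp (Complex.I * k * x)‖ ^ 2 : ℝ) : ℂ)
        = (starRingEnd ℂ) (∑ k ∈ F, c k * Complex.exp (Complex.I * k * x))
          * (∑ l ∈ F, c l * Complex.exp (Complex.I * l * x)) := by
      rw [← Complex.normSq_eq_conj_mul_self]
      norm_cast
      simp [Complex.normSq_eq_norm_sq]
    rw [h1, map_sum, Finset.sum_mul_sum]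
    refine Finset.sum_congr rfl fun k _ => Finset.sum_congr rfl fun l _ => ?_
    rw [map_mul, ← Complex.exp_conj]
    rw [show (starRingEnd ℂ) (Complex.I * k * x) = -(Complex.I * k * x) by
      simp [Complex.conj_I, mul_comm]]
    rw [show Complex.I * ((l : ℂ) - k) * x = -(Complex.I * k * x) + Complex.I * l * x by ring,
      Complex.exp_add]
    ring
  have hint : ∀ k l : ℤ, Integrable (fun x : ℝ => (starRingEnd ℂ) (c k) * c l
      * Complex.exp (Complex.I * ((l : ℂ) - k) * x)) ν := by
    intro k l
    have h := (integrable_exp_int ν (l - k)).const_mul ((starRingEnd ℂ) (c k) * c l)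
    push_cast at h
    exact h
  have hswap : ∫ x, (∑ k ∈ F, ∑ l ∈ F, (starRingEnd ℂ) (c k) * c l
        * Complex.exp (Complex.I * (l - k) * x)) ∂ν
      = ∑ k ∈ F, ∑ l ∈ F, (starRingEnd ℂ) (c k) * c l
        * ∫ x, Complex.exp (Complex.I * (l - k) * x) ∂ν := by
    rw [integral_finset_sum _ (fun k _ => integrable_finset_sum _
      (fun l _ => hint k l))]
    refine Finset.sum_congr rfl fun k _ => ?_
    rw [integral_finset_sum _ (fun l _ => hint k l)]
    exact Finset.sum_congr rfl fun l _ => (integral_const_mul _ _)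
  rw [← hswap, ← integral_congr_ae (ae_of_all _ hre)]
  exact integral_ofReal

lemma int_exp_Ico (n : ℤ) :
    (∫ x in Set.Ico (0:ℝ) (2 * Real.pi), Complex.exp (Complex.I * n * x))
      = if n = 0 then ((2 * Real.pi : ℝ) : ℂ) else 0 := by
  have h2pi : (0:ℝ) ≤ 2 * Real.pi := by positivity
  rw [integral_Ico_eq_integral_Ioo, ← integral_Ioc_eq_integral_Ioo,
    ← intervalIntegral.integral_of_le h2pi]
  by_cases hn : n = 0
  · simp [hn]
  · rw [if_neg hn]
    have hc : (Complex.I * n) ≠ 0 := by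
      simp [Complex.I_ne_zero, Complex.ext_iff]
      exact_mod_cast hn
    have h := integral_exp_mul_complex (a := 0) (b := 2 * Real.pi) (c := Complex.I * n) hc
    simp only [mul_assoc] at h ⊢
    rw [h]
    have h1 : Complex.exp (Complex.I * (n * (2 * Real.pi : ℝ))) = 1 := by
      rw [show Complex.I * ((n : ℂ) * (2 * Real.pi : ℝ)) = n * (2 * Real.pi * Complex.I) by
        push_cast; ring]
      exact Complex.exp_int_mul_two_pi_mul_I n
    rw [h1]
    simp

lemma bessel (U0 : unitary (E →L[ℂ] E)) (ψ φ : E) (μ : Measure ℝ) (C : NNReal)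
    [IsFiniteMeasure μ] (hnull : μ (Set.Ico 0 (2 * Real.pi))ᶜ = 0)
    (hspec : ∀ t : ℤ, (inner ℂ ψ (uop U0 t ψ) : ℂ) = ∫ l, Complex.exp (Complex.I * t * l) ∂μ)
    (hle : μ ≤ C • volume) (F : Finset ℤ) :
    ∑ k ∈ F, ‖(inner ℂ φ (uop U0 k ψ) : ℂ)‖ ^ 2 ≤ 2 * Real.pi * C * ‖φ‖ ^ 2 := by
  classical
  set d : ℤ → ℂ := fun k => inner ℂ φ (uop U0 k ψ) with hd
  set c : ℤ → ℂ := fun k => (starRingEnd ℂ) (d k) with hc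
  set v : E := ∑ k ∈ F, c k • uop U0 k ψ with hv
  set S : ℝ := ∑ k ∈ F, ‖d k‖ ^ 2 with hS
  have hS0 : 0 ≤ S := Finset.sum_nonneg fun k _ => by positivity
  have h1 : (inner ℂ φ v : ℂ) = (S : ℂ) := by
    rw [hv, inner_sum]
    push_cast [hS]
    refine Finset.sum_congr rfl fun k _ => ?_
    rw [inner_smul_right]
    have hk : (inner ℂ φ (uop U0 k ψ) : ℂ) = d k := rfl
    rw [hk, hc]
    rw [show ((‖d k‖ : ℂ) ^ 2) = ((Complex.normSq (d k) : ℝ) : ℂ) by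
      norm_cast; simp [Complex.normSq_eq_norm_sq]]
    rw [Complex.normSq_eq_conj_mul_self]
  have h2 : S ≤ ‖φ‖ * ‖v‖ := by
    calc S = ‖(S : ℂ)‖ := by rw [Complex.norm_real, Real.norm_eq_abs, _root_.abs_of_nonneg hS0]
    _ = ‖(inner ℂ φ v : ℂ)‖ := by rw [h1]
    _ ≤ ‖φ‖ * ‖v‖ := norm_inner_le_norm _ _
  have h3 : (inner ℂ v v : ℂ)
      = ((∫ x, ‖∑ k ∈ F, c k * Complex.exp (Complex.I * k * x)‖ ^ 2 ∂μ : ℝ) : ℂ) := by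
    rw [← sum_integral_exp μ F c, hv, sum_inner]
    refine Finset.sum_congr rfl fun k _ => ?_
    rw [inner_smul_left, inner_sum, Finset.mul_sum]
    refine Finset.sum_congr rfl fun l _ => ?_
    rw [inner_smul_right, inner_uop, hspec (l - k)]
    push_cast
    ring
  have h4 : ‖v‖ ^ 2 = ∫ x, ‖∑ k ∈ F, c k * Complex.exp (Complex.I * k * x)‖ ^ 2 ∂μ := by
    have h := inner_self_eq_norm_sq_to_K (𝕜 := ℂ) v
    rw [h3] at h
    have h' : ((‖v‖ ^ 2 : ℝ) : ℂ)
        = ((∫ x, ‖∑ k ∈ F, c k * Complex.exp (Complex.I * k * x)‖ ^ 2 ∂μ : ℝ) : ℂ) := by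
      push_cast
      exact h.symm
    exact Complex.ofReal_injective h'
  haveI hIcofin : IsFiniteMeasure (volume.restrict (Set.Ico (0:ℝ) (2 * Real.pi))) := by
    constructor
    rw [Measure.restrict_apply_univ]
    exact measure_Ico_lt_top
  have hpcont : Continuous fun x : ℝ => ‖∑ k ∈ F, c k * Complex.exp (Complex.I * k * x)‖ ^ 2 := by
    apply Continuous.pow
    apply Continuous.norm
    exact continuous_finset_sum _ fun k _ =>
      continuous_const.mul (Complex.continuous_exp.comp
        ((continuous_const.mul Complex.continuous_ofReal)))
  have h5 : ∫ x, ‖∑ k ∈ F, c k * Complex.exp (Complex.I * k * x)‖ ^ 2 ∂μ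
      ≤ (C : ℝ) * ∫ x in Set.Ico (0:ℝ) (2 * Real.pi),
          ‖∑ k ∈ F, c k * Complex.exp (Complex.I * k * x)‖ ^ 2 := by
    have hmem : ∀ᵐ x ∂μ, x ∈ Set.Ico (0:ℝ) (2 * Real.pi) :=
      (MeasureTheory.mem_ae_iff).mpr hnull
    have hμr : μ.restrict (Set.Ico (0:ℝ) (2 * Real.pi)) = μ :=
      Measure.restrict_eq_self_of_ae_mem hmem
    have hres : μ.restrict (Set.Ico (0:ℝ) (2 * Real.pi))
        ≤ (C • volume).restrict (Set.Ico (0:ℝ) (2 * Real.pi)) :=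
      Measure.restrict_mono subset_rfl hle
    have hCsmul : (C • volume : Measure ℝ) = ((C : ℝ≥0∞) • volume) := rfl
    have hint : Integrable (fun x : ℝ => ‖∑ k ∈ F, c k * Complex.exp (Complex.I * k * x)‖ ^ 2)
        ((C • volume).restrict (Set.Ico (0:ℝ) (2 * Real.pi))) := by
      rw [hCsmul, Measure.restrict_smul]
      refine Integrable.smul_measure ?_ ENNReal.coe_ne_top
      exact ((hpcont.continuousOn.integrableOn_compact isCompact_Icc).mono_set
        Set.Ico_subset_Icc_self)
    calc ∫ x, ‖∑ k ∈ F, c k * Complex.exp (Complex.I * k * x)‖ ^ 2 ∂μ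
        = ∫ x, ‖∑ k ∈ F, c k * Complex.exp (Complex.I * k * x)‖ ^ 2
            ∂(μ.restrict (Set.Ico (0:ℝ) (2 * Real.pi))) := by rw [hμr]
      _ ≤ ∫ x, ‖∑ k ∈ F, c k * Complex.exp (Complex.I * k * x)‖ ^ 2
            ∂((C • volume).restrict (Set.Ico (0:ℝ) (2 * Real.pi))) :=
          integral_mono_measure hres (ae_of_all _ fun x => by positivity) hint
      _ = (C : ℝ) * ∫ x in Set.Ico (0:ℝ) (2 * Real.pi),
            ‖∑ k ∈ F, c k * Complex.exp (Complex.I * k * x)‖ ^ 2 := by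
          rw [hCsmul, Measure.restrict_smul, integral_smul_measure]
          simp [smul_eq_mul]
  have h6 : ∫ x in Set.Ico (0:ℝ) (2 * Real.pi),
      ‖∑ k ∈ F, c k * Complex.exp (Complex.I * k * x)‖ ^ 2 = 2 * Real.pi * S := by
    have hkey := sum_integral_exp (volume.restrict (Set.Ico (0:ℝ) (2 * Real.pi))) F c
    have hdiag : ∑ k ∈ F, ∑ l ∈ F, (starRingEnd ℂ) (c k) * c l
        * ∫ x in Set.Ico (0:ℝ) (2 * Real.pi), Complex.exp (Complex.I * ((l : ℂ) - k) * x)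
        = ((2 * Real.pi * S : ℝ) : ℂ) := by
      have hterm : ∀ k l : ℤ,
          (∫ x in Set.Ico (0:ℝ) (2 * Real.pi), Complex.exp (Complex.I * ((l : ℂ) - k) * x))
          = if l = k then ((2 * Real.pi : ℝ) : ℂ) else 0 := by
        intro k l
        have h := int_exp_Ico (l - k)
        push_cast at h
        rw [h]
        simp [sub_eq_zero]
      calc ∑ k ∈ F, ∑ l ∈ F, (starRingEnd ℂ) (c k) * c l
          * ∫ x in Set.Ico (0:ℝ) (2 * Real.pi), Complex.exp (Complex.I * ((l : ℂ) - k) * x)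
          = ∑ k ∈ F, ∑ l ∈ F, (if l = k then (starRingEnd ℂ) (c k) * c l
              * ((2 * Real.pi : ℝ) : ℂ) else 0) := by
            refine Finset.sum_congr rfl fun k _ => Finset.sum_congr rfl fun l _ => ?_
            rw [hterm k l]
            split_ifs <;> simp
        _ = ∑ k ∈ F, (starRingEnd ℂ) (c k) * c k * ((2 * Real.pi : ℝ) : ℂ) := by
            refine Finset.sum_congr rfl fun k hk => ?_
            rw [Finset.sum_ite_eq' F k (fun l => (starRingEnd ℂ) (c k) * c l
              * ((2 * Real.pi : ℝ) : ℂ)), if_pos hk]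
        _ = ((2 * Real.pi * S : ℝ) : ℂ) := by
            push_cast [hS, Finset.mul_sum]
            refine Finset.sum_congr rfl fun k _ => ?_
            rw [hc, Complex.conj_conj, Complex.mul_conj]
            rw [show ((Complex.normSq (d k) : ℝ) : ℂ) = ((‖d k‖ : ℂ) ^ 2) by
              norm_cast; simp [Complex.normSq_eq_norm_sq]]
            ring
    rw [hdiag] at hkey
    exact_mod_cast hkey.symm
  have hv2 : ‖v‖ ^ 2 ≤ (C : ℝ) * (2 * Real.pi * S) := by
    rw [h4, ← h6]
    exact h5
  suffices hfin : S ≤ 2 * Real.pi * C * ‖φ‖ ^ 2 by exact hfin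
  rcases hS0.eq_or_lt with h0 | hpos
  · rw [← h0]; positivity
  · have hKS : S * S ≤ (2 * Real.pi * (C : ℝ) * ‖φ‖ ^ 2) * S := by
      nlinarith [mul_self_le_mul_self hS0 h2, hv2, sq_nonneg ‖φ‖, norm_nonneg φ, norm_nonneg v]
    exact le_of_mul_le_mul_right hKS hpos

lemma uop_natCast (U0 : unitary (E →L[ℂ] E)) (n : ℕ) :
    ((U0 ^ n : unitary (E →L[ℂ] E)) : E →L[ℂ] E) = uop U0 (n : ℤ) := by
  rw [uop, zpow_natCast]

/-- Tail summability with uniform bound. -/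
lemma bessel_tail (U0 : unitary (E →L[ℂ] E)) (ψ φ : E) (μ : Measure ℝ) (C : NNReal)
    [IsFiniteMeasure μ] (hnull : μ (Set.Ico 0 (2 * Real.pi))ᶜ = 0)
    (hspec : ∀ t : ℤ, (inner ℂ ψ (uop U0 t ψ) : ℂ) = ∫ l, Complex.exp (Complex.I * t * l) ∂μ)
    (hle : μ ≤ C • volume) (s : ℕ) :
    Summable (fun k : ℕ => ‖(inner ℂ φ (uop U0 ((k : ℤ) + (s : ℤ)) ψ) : ℂ)‖ ^ 2) ∧
      ∑' k : ℕ, ‖(inner ℂ φ (uop U0 ((k : ℤ) + (s : ℤ)) ψ) : ℂ)‖ ^ 2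
        ≤ 2 * Real.pi * C * ‖φ‖ ^ 2 := by
  have key : ∀ Fn : Finset ℕ,
      ∑ k ∈ Fn, ‖(inner ℂ φ (uop U0 ((k : ℤ) + (s : ℤ)) ψ) : ℂ)‖ ^ 2
        ≤ 2 * Real.pi * C * ‖φ‖ ^ 2 := by
    intro Fn
    set emb : ℕ ↪ ℤ := ⟨fun k => (k : ℤ) + s, by intro u v h; simpa using h⟩ with hemb
    have := bessel U0 ψ φ μ C hnull hspec hle (Fn.map emb)
    rwa [Finset.sum_map Fn emb (fun z => ‖(inner ℂ φ (uop U0 z ψ) : ℂ)‖ ^ 2)] at this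
  have hsum := summable_of_sum_le (fun k => by positivity) key
  exact ⟨hsum, Summable.tsum_le_of_sum_le hsum key⟩

/-- Cauchy–Schwarz for tsums. -/
lemma tsum_cs {x y : ℕ → ℝ} (hx : ∀ k, 0 ≤ x k) (hy : ∀ k, 0 ≤ y k)
    (hx2 : Summable fun k => x k ^ 2) (hy2 : Summable fun k => y k ^ 2) :
    Summable (fun k => x k * y k) ∧
      ∑' k, x k * y k ≤ Real.sqrt (∑' k, x k ^ 2) * Real.sqrt (∑' k, y k ^ 2) := by
  have key : ∀ F : Finset ℕ, ∑ k ∈ F, x k * y k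
      ≤ Real.sqrt (∑' k, x k ^ 2) * Real.sqrt (∑' k, y k ^ 2) := by
    intro F
    have h1 : (∑ k ∈ F, x k * y k) ^ 2 ≤ (∑ k ∈ F, x k ^ 2) * ∑ k ∈ F, y k ^ 2 :=
      Finset.sum_mul_sq_le_sq_mul_sq F x y
    have hxF : ∑ k ∈ F, x k ^ 2 ≤ ∑' k, x k ^ 2 :=
      Summable.sum_le_tsum F (fun k _ => by positivity) hx2
    have hyF : ∑ k ∈ F, y k ^ 2 ≤ ∑' k, y k ^ 2 :=
      Summable.sum_le_tsum F (fun k _ => by positivity) hy2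
    have hsum0 : 0 ≤ ∑ k ∈ F, x k * y k :=
      Finset.sum_nonneg fun k _ => mul_nonneg (hx k) (hy k)
    have htx0 : 0 ≤ ∑' k, x k ^ 2 := tsum_nonneg fun k => by positivity
    have hty0 : 0 ≤ ∑' k, y k ^ 2 := tsum_nonneg fun k => by positivity
    calc ∑ k ∈ F, x k * y k = Real.sqrt ((∑ k ∈ F, x k * y k) ^ 2) :=
          (Real.sqrt_sq hsum0).symm
      _ ≤ Real.sqrt ((∑' k, x k ^ 2) * ∑' k, y k ^ 2) := by
          apply Real.sqrt_le_sqrt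
          refine h1.trans ?_
          exact mul_le_mul hxF hyF (Finset.sum_nonneg fun k _ => by positivity) htx0
      _ = Real.sqrt (∑' k, x k ^ 2) * Real.sqrt (∑' k, y k ^ 2) := Real.sqrt_mul htx0 _
  have hsum := summable_of_sum_le (fun k => mul_nonneg (hx k) (hy k)) key
  exact ⟨hsum, Summable.tsum_le_of_sum_le hsum key⟩

/-- Nuclear representation of the matrix element. -/
lemma rep_term (Qts Y : E →L[ℂ] E) (a b : ℕ → E)
    (hab : Summable (fun n => ‖a n‖ * ‖b n‖))
    (hrep : ∀ ψ, Y ψ = ∑' n, (inner ℂ (b n) ψ : ℂ) • a n) (x φk : E) :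
    (inner ℂ φk ((Qts.comp Y) x) : ℂ)
      = ∑' n, (inner ℂ (b n) x : ℂ) * (inner ℂ φk (Qts (a n)) : ℂ) := by
  have hsum1 : Summable fun n => (inner ℂ (b n) x : ℂ) • a n := by
    apply Summable.of_norm_bounded (g := fun n => ‖a n‖ * ‖b n‖ * ‖x‖) (hab.mul_right _)
    intro n
    rw [norm_smul]
    calc ‖(inner ℂ (b n) x : ℂ)‖ * ‖a n‖ ≤ ‖b n‖ * ‖x‖ * ‖a n‖ :=
        mul_le_mul_of_nonneg_right (norm_inner_le_norm _ _) (norm_nonneg _)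
      _ = ‖a n‖ * ‖b n‖ * ‖x‖ := by ring
  have h2 : (Qts.comp Y) x = ∑' n, (inner ℂ (b n) x : ℂ) • Qts (a n) := by
    rw [ContinuousLinearMap.comp_apply, hrep x, Qts.map_tsum hsum1]
    exact tsum_congr fun n => Qts.map_smul _ _
  have hsum2 : Summable fun n => (inner ℂ (b n) x : ℂ) • Qts (a n) := by
    apply Summable.of_norm_bounded (g := fun n => ‖a n‖ * ‖b n‖ * (‖x‖ * ‖Qts‖))
      (hab.mul_right _)
    intro n
    rw [norm_smul]
    calc ‖(inner ℂ (b n) x : ℂ)‖ * ‖Qts (a n)‖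
        ≤ (‖b n‖ * ‖x‖) * (‖Qts‖ * ‖a n‖) := by
          apply mul_le_mul (norm_inner_le_norm _ _) (Qts.le_opNorm _) (norm_nonneg _)
          positivity
      _ = ‖a n‖ * ‖b n‖ * (‖x‖ * ‖Qts‖) := by ring
  rw [h2]
  calc (inner ℂ φk (∑' n, (inner ℂ (b n) x : ℂ) • Qts (a n)) : ℂ)
      = (innerSL ℂ φk) (∑' n, (inner ℂ (b n) x : ℂ) • Qts (a n)) := rfl
    _ = ∑' n, (innerSL ℂ φk) ((inner ℂ (b n) x : ℂ) • Qts (a n)) :=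
        (innerSL ℂ φk).map_tsum hsum2
    _ = ∑' n, (inner ℂ (b n) x : ℂ) * (inner ℂ φk (Qts (a n)) : ℂ) :=
        tsum_congr fun n => by simp [inner_smul_right]

end ZHelpers

variable {E : Type*} [NormedAddCommGroup E] [InnerProductSpace ℂ E]
  [CompleteSpace E] [TopologicalSpace.SeparableSpace E]

/-- Lemma 3.5 (2): with `Z_{t,s}(A) = ∑_{k≥0} U₀^{-k-t} A U₀^{k+s}`,
for `Y` trace class and `Q(t,s)` uniformly bounded,
`⟨ψ, Z_{t,s}(Q(t,s) Y) ψ⟩ = ∑_{k≥0} ⟨U₀^{k+t}ψ, Q(t,s) Y U₀^{k+s}ψ⟩ → 0` as `t,s → ∞`. -/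
theorem Z_limit_traceClass_right
    (U0 : unitary (E →L[ℂ] E)) (Y : E →L[ℂ] E) (hY : IsTraceClass Y)
    (Q : ℕ → ℕ → (E →L[ℂ] E)) (hQ : ∃ M : ℝ, ∀ t s : ℕ, ‖Q t s‖ ≤ M)
    (ψ : E) (hψ : IsAc0Vector U0 ψ) :
    Tendsto (fun p : ℕ × ℕ => ∑' k : ℕ,
      (inner ℂ ((((U0 ^ (k + p.1)) : unitary (E →L[ℂ] E)) : E →L[ℂ] E) ψ)
        (((Q p.1 p.2).comp Y) ((((U0 ^ (k + p.2)) : unitary (E →L[ℂ] E)) : E →L[ℂ] E) ψ)) : ℂ))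
      atTop (𝓝 0) := by
  classical
  obtain ⟨μ, C, ⟨hfin, hnull, hspec0⟩, hle⟩ := hψ
  haveI : IsFiniteMeasure μ := hfin
  have hspec : ∀ t : ℤ, (inner ℂ ψ (uop U0 t ψ) : ℂ)
      = ∫ l, Complex.exp (Complex.I * t * l) ∂μ := hspec0
  obtain ⟨a, b, hab, hrep⟩ := hY
  obtain ⟨M₀, hM₀⟩ := hQ
  set M : ℝ := max M₀ 0 with hMdef
  have hM : ∀ t s : ℕ, ‖Q t s‖ ≤ M := fun t s => le_trans (hM₀ t s) (le_max_left _ _)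
  have hM0 : (0:ℝ) ≤ M := le_max_right _ _
  set K : ℝ := Real.sqrt (2 * Real.pi * C) with hKdef
  have hK0 : (0:ℝ) ≤ K := Real.sqrt_nonneg _
  have h2πC : (0:ℝ) ≤ 2 * Real.pi * C := by positivity
  -- tail bound for any vector
  have g_le : ∀ (φ : E) (s : ℕ),
      Real.sqrt (∑' k : ℕ, ‖(inner ℂ φ (uop U0 ((k : ℤ) + (s : ℤ)) ψ) : ℂ)‖ ^ 2)
        ≤ K * ‖φ‖ := by
    intro φ s
    have h := (bessel_tail U0 ψ φ μ C hnull hspec hle s).2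
    calc Real.sqrt (∑' k : ℕ, ‖(inner ℂ φ (uop U0 ((k : ℤ) + (s : ℤ)) ψ) : ℂ)‖ ^ 2)
        ≤ Real.sqrt (2 * Real.pi * C * ‖φ‖ ^ 2) := Real.sqrt_le_sqrt h
      _ = K * ‖φ‖ := by
          rw [Real.sqrt_mul h2πC, Real.sqrt_sq (norm_nonneg _), hKdef]
  -- the dominating sequence
  set D : ℕ → ℝ := fun s => ∑' n : ℕ,
    Real.sqrt (∑' k : ℕ, ‖(inner ℂ (b n) (uop U0 ((k : ℤ) + (s : ℤ)) ψ) : ℂ)‖ ^ 2)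
      * (K * (M * ‖a n‖)) with hDdef
  have hboundsum : Summable (fun n : ℕ => (K * ‖b n‖) * (K * (M * ‖a n‖))) := by
    have : (fun n : ℕ => (K * ‖b n‖) * (K * (M * ‖a n‖)))
        = fun n => (K * K * M) * (‖a n‖ * ‖b n‖) := by funext n; ring
    rw [this]
    exact hab.mul_left _
  -- the key uniform bound
  have key : ∀ t s : ℕ,
      ‖∑' k : ℕ, (inner ℂ (uop U0 ((k : ℤ) + (t : ℤ)) ψ)
          (((Q t s).comp Y) (uop U0 ((k : ℤ) + (s : ℤ)) ψ)) : ℂ)‖ ≤ D s := by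
    intro t s
    have hX2 : ∀ n : ℕ, Summable (fun k : ℕ =>
        ‖(inner ℂ (b n) (uop U0 ((k : ℤ) + (s : ℤ)) ψ) : ℂ)‖ ^ 2) :=
      fun n => (bessel_tail U0 ψ (b n) μ C hnull hspec hle s).1
    have hY2 : ∀ n : ℕ, Summable (fun k : ℕ =>
          ‖(inner ℂ (uop U0 ((k : ℤ) + (t : ℤ)) ψ) ((Q t s) (a n)) : ℂ)‖ ^ 2)
        ∧ ∑' k : ℕ, ‖(inner ℂ (uop U0 ((k : ℤ) + (t : ℤ)) ψ) ((Q t s) (a n)) : ℂ)‖ ^ 2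
          ≤ 2 * Real.pi * C * ‖(Q t s) (a n)‖ ^ 2 := by
      intro n
      have hswap : ∀ k : ℕ, ‖(inner ℂ (uop U0 ((k : ℤ) + (t : ℤ)) ψ) ((Q t s) (a n)) : ℂ)‖
          = ‖(inner ℂ ((Q t s) (a n)) (uop U0 ((k : ℤ) + (t : ℤ)) ψ) : ℂ)‖ :=
        fun k => norm_inner_symm _ _
      simp only [hswap]
      exact bessel_tail U0 ψ ((Q t s) (a n)) μ C hnull hspec hle t
    -- Cauchy-Schwarz in k, for each n
    have hcs : ∀ n : ℕ, Summable (fun k : ℕ =>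
        ‖(inner ℂ (b n) (uop U0 ((k : ℤ) + (s : ℤ)) ψ) : ℂ)‖
          * ‖(inner ℂ (uop U0 ((k : ℤ) + (t : ℤ)) ψ) ((Q t s) (a n)) : ℂ)‖)
        ∧ ∑' k : ℕ, ‖(inner ℂ (b n) (uop U0 ((k : ℤ) + (s : ℤ)) ψ) : ℂ)‖
            * ‖(inner ℂ (uop U0 ((k : ℤ) + (t : ℤ)) ψ) ((Q t s) (a n)) : ℂ)‖
          ≤ Real.sqrt (∑' k : ℕ, ‖(inner ℂ (b n) (uop U0 ((k : ℤ) + (s : ℤ)) ψ) : ℂ)‖ ^ 2)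
            * (K * (M * ‖a n‖)) := by
      intro n
      obtain ⟨hsum, hbd⟩ := tsum_cs (fun k => norm_nonneg _) (fun k => norm_nonneg _)
        (hX2 n) (hY2 n).1
      refine ⟨hsum, hbd.trans ?_⟩
      apply mul_le_mul_of_nonneg_left _ (Real.sqrt_nonneg _)
      calc Real.sqrt (∑' k : ℕ,
            ‖(inner ℂ (uop U0 ((k : ℤ) + (t : ℤ)) ψ) ((Q t s) (a n)) : ℂ)‖ ^ 2)
          ≤ Real.sqrt (2 * Real.pi * C * ‖(Q t s) (a n)‖ ^ 2) := Real.sqrt_le_sqrt (hY2 n).2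
        _ = K * ‖(Q t s) (a n)‖ := by
            rw [Real.sqrt_mul h2πC, Real.sqrt_sq (norm_nonneg _), hKdef]
        _ ≤ K * (M * ‖a n‖) := by
            apply mul_le_mul_of_nonneg_left _ hK0
            calc ‖(Q t s) (a n)‖ ≤ ‖Q t s‖ * ‖a n‖ := (Q t s).le_opNorm _
              _ ≤ M * ‖a n‖ := mul_le_mul_of_nonneg_right (hM t s) (norm_nonneg _)
    -- joint summability
    have hGnn : ∀ q : ℕ × ℕ, (0:ℝ) ≤ ‖(inner ℂ (b q.1) (uop U0 ((q.2 : ℤ) + (s : ℤ)) ψ) : ℂ)‖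
        * ‖(inner ℂ (uop U0 ((q.2 : ℤ) + (t : ℤ)) ψ) ((Q t s) (a q.1)) : ℂ)‖ :=
      fun q => mul_nonneg (norm_nonneg _) (norm_nonneg _)
    have hsumn : Summable (fun n : ℕ => ∑' k : ℕ,
        ‖(inner ℂ (b n) (uop U0 ((k : ℤ) + (s : ℤ)) ψ) : ℂ)‖
          * ‖(inner ℂ (uop U0 ((k : ℤ) + (t : ℤ)) ψ) ((Q t s) (a n)) : ℂ)‖) := by
      apply Summable.of_nonneg_of_le
        (fun n => tsum_nonneg fun k => mul_nonneg (norm_nonneg _) (norm_nonneg _))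
        (fun n => ((hcs n).2).trans (mul_le_mul_of_nonneg_right (g_le (b n) s)
          (by positivity)))
      exact hboundsum
    have joint : Summable (fun q : ℕ × ℕ =>
        ‖(inner ℂ (b q.1) (uop U0 ((q.2 : ℤ) + (s : ℤ)) ψ) : ℂ)‖
          * ‖(inner ℂ (uop U0 ((q.2 : ℤ) + (t : ℤ)) ψ) ((Q t s) (a q.1)) : ℂ)‖) :=
      (summable_prod_of_nonneg hGnn).mpr ⟨fun n => (hcs n).1, hsumn⟩
    have jointswap : Summable (fun q : ℕ × ℕ =>
        ‖(inner ℂ (b q.2) (uop U0 ((q.1 : ℤ) + (s : ℤ)) ψ) : ℂ)‖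
          * ‖(inner ℂ (uop U0 ((q.1 : ℤ) + (t : ℤ)) ψ) ((Q t s) (a q.2)) : ℂ)‖) :=
      joint.prod_symm
    obtain ⟨hperk, hsumk⟩ := (summable_prod_of_nonneg
      (fun q => mul_nonneg (norm_nonneg _) (norm_nonneg _))).mp jointswap
    -- per-k bound on the matrix element
    have hterm : ∀ k : ℕ, (inner ℂ (uop U0 ((k : ℤ) + (t : ℤ)) ψ)
          (((Q t s).comp Y) (uop U0 ((k : ℤ) + (s : ℤ)) ψ)) : ℂ)
        = ∑' n : ℕ, (inner ℂ (b n) (uop U0 ((k : ℤ) + (s : ℤ)) ψ) : ℂ)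
            * (inner ℂ (uop U0 ((k : ℤ) + (t : ℤ)) ψ) ((Q t s) (a n)) : ℂ) :=
      fun k => rep_term (Q t s) Y a b hab hrep _ _
    have htermsum : ∀ k : ℕ, Summable (fun n : ℕ =>
        (inner ℂ (b n) (uop U0 ((k : ℤ) + (s : ℤ)) ψ) : ℂ)
          * (inner ℂ (uop U0 ((k : ℤ) + (t : ℤ)) ψ) ((Q t s) (a n)) : ℂ)) := by
      intro k
      apply Summable.of_norm
      have : (fun n : ℕ => ‖(inner ℂ (b n) (uop U0 ((k : ℤ) + (s : ℤ)) ψ) : ℂ)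
          * (inner ℂ (uop U0 ((k : ℤ) + (t : ℤ)) ψ) ((Q t s) (a n)) : ℂ)‖)
          = fun n => ‖(inner ℂ (b n) (uop U0 ((k : ℤ) + (s : ℤ)) ψ) : ℂ)‖
            * ‖(inner ℂ (uop U0 ((k : ℤ) + (t : ℤ)) ψ) ((Q t s) (a n)) : ℂ)‖ := by
        funext n; exact norm_mul _ _
      rw [this]
      exact hperk k
    have htermbd : ∀ k : ℕ, ‖(inner ℂ (uop U0 ((k : ℤ) + (t : ℤ)) ψ)
          (((Q t s).comp Y) (uop U0 ((k : ℤ) + (s : ℤ)) ψ)) : ℂ)‖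
        ≤ ∑' n : ℕ, ‖(inner ℂ (b n) (uop U0 ((k : ℤ) + (s : ℤ)) ψ) : ℂ)‖
            * ‖(inner ℂ (uop U0 ((k : ℤ) + (t : ℤ)) ψ) ((Q t s) (a n)) : ℂ)‖ := by
      intro k
      rw [hterm k]
      have hnormeq : (fun n : ℕ => ‖(inner ℂ (b n) (uop U0 ((k : ℤ) + (s : ℤ)) ψ) : ℂ)
          * (inner ℂ (uop U0 ((k : ℤ) + (t : ℤ)) ψ) ((Q t s) (a n)) : ℂ)‖)
          = fun n : ℕ => ‖(inner ℂ (b n) (uop U0 ((k : ℤ) + (s : ℤ)) ψ) : ℂ)‖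
            * ‖(inner ℂ (uop U0 ((k : ℤ) + (t : ℤ)) ψ) ((Q t s) (a n)) : ℂ)‖ := by
        funext n; exact norm_mul _ _
      have hnorms : Summable (fun n : ℕ => ‖(inner ℂ (b n) (uop U0 ((k : ℤ) + (s : ℤ)) ψ) : ℂ)
          * (inner ℂ (uop U0 ((k : ℤ) + (t : ℤ)) ψ) ((Q t s) (a n)) : ℂ)‖) := by
        rw [hnormeq]; exact hperk k
      calc ‖∑' n : ℕ, (inner ℂ (b n) (uop U0 ((k : ℤ) + (s : ℤ)) ψ) : ℂ)
            * (inner ℂ (uop U0 ((k : ℤ) + (t : ℤ)) ψ) ((Q t s) (a n)) : ℂ)‖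
          ≤ ∑' n : ℕ, ‖(inner ℂ (b n) (uop U0 ((k : ℤ) + (s : ℤ)) ψ) : ℂ)
            * (inner ℂ (uop U0 ((k : ℤ) + (t : ℤ)) ψ) ((Q t s) (a n)) : ℂ)‖ :=
            norm_tsum_le_tsum_norm hnorms
        _ = ∑' n : ℕ, ‖(inner ℂ (b n) (uop U0 ((k : ℤ) + (s : ℤ)) ψ) : ℂ)‖
            * ‖(inner ℂ (uop U0 ((k : ℤ) + (t : ℤ)) ψ) ((Q t s) (a n)) : ℂ)‖ := by
            rw [hnormeq]
    have htns : Summable (fun k : ℕ => ‖(inner ℂ (uop U0 ((k : ℤ) + (t : ℤ)) ψ)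
        (((Q t s).comp Y) (uop U0 ((k : ℤ) + (s : ℤ)) ψ)) : ℂ)‖) :=
      Summable.of_nonneg_of_le (fun k => norm_nonneg _) htermbd hsumk
    have hDsum : Summable (fun n : ℕ =>
        Real.sqrt (∑' k : ℕ, ‖(inner ℂ (b n) (uop U0 ((k : ℤ) + (s : ℤ)) ψ) : ℂ)‖ ^ 2)
          * (K * (M * ‖a n‖))) := by
      apply Summable.of_nonneg_of_le (fun n => by positivity)
        (fun n => mul_le_mul_of_nonneg_right (g_le (b n) s) (by positivity))
      exact hboundsum
    calc ‖∑' k : ℕ, (inner ℂ (uop U0 ((k : ℤ) + (t : ℤ)) ψ)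
            (((Q t s).comp Y) (uop U0 ((k : ℤ) + (s : ℤ)) ψ)) : ℂ)‖
        ≤ ∑' k : ℕ, ‖(inner ℂ (uop U0 ((k : ℤ) + (t : ℤ)) ψ)
            (((Q t s).comp Y) (uop U0 ((k : ℤ) + (s : ℤ)) ψ)) : ℂ)‖ :=
          norm_tsum_le_tsum_norm htns
      _ ≤ ∑' k : ℕ, ∑' n : ℕ, ‖(inner ℂ (b n) (uop U0 ((k : ℤ) + (s : ℤ)) ψ) : ℂ)‖
            * ‖(inner ℂ (uop U0 ((k : ℤ) + (t : ℤ)) ψ) ((Q t s) (a n)) : ℂ)‖ :=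
          Summable.tsum_le_tsum htermbd htns hsumk
      _ = ∑' n : ℕ, ∑' k : ℕ, ‖(inner ℂ (b n) (uop U0 ((k : ℤ) + (s : ℤ)) ψ) : ℂ)‖
            * ‖(inner ℂ (uop U0 ((k : ℤ) + (t : ℤ)) ψ) ((Q t s) (a n)) : ℂ)‖ :=
          Summable.tsum_comm joint
      _ ≤ ∑' n : ℕ,
            Real.sqrt (∑' k : ℕ, ‖(inner ℂ (b n) (uop U0 ((k : ℤ) + (s : ℤ)) ψ) : ℂ)‖ ^ 2)
              * (K * (M * ‖a n‖)) :=
          Summable.tsum_le_tsum (fun n => (hcs n).2) hsumn hDsum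
      _ = D s := (congrFun hDdef s).symm
  -- D tends to zero
  have hDtend : Tendsto D atTop (𝓝 0) := by
    have h0 : ∀ n : ℕ, Tendsto (fun s : ℕ =>
        Real.sqrt (∑' k : ℕ, ‖(inner ℂ (b n) (uop U0 ((k : ℤ) + (s : ℤ)) ψ) : ℂ)‖ ^ 2)
          * (K * (M * ‖a n‖))) atTop (𝓝 0) := by
      intro n
      have h1 : Tendsto (fun s : ℕ => ∑' k : ℕ,
          ‖(inner ℂ (b n) (uop U0 (((k + s : ℕ) : ℤ)) ψ) : ℂ)‖ ^ 2) atTop (𝓝 0) :=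
        tendsto_sum_nat_add (fun m : ℕ => ‖(inner ℂ (b n) (uop U0 (m : ℤ) ψ) : ℂ)‖ ^ 2)
      have h2 : (fun s : ℕ => ∑' k : ℕ,
            ‖(inner ℂ (b n) (uop U0 ((k : ℤ) + (s : ℤ)) ψ) : ℂ)‖ ^ 2)
          = fun s : ℕ => ∑' k : ℕ,
            ‖(inner ℂ (b n) (uop U0 (((k + s : ℕ) : ℤ)) ψ) : ℂ)‖ ^ 2 := by
        funext s
        exact tsum_congr fun k => by rw [Nat.cast_add]
      have h3 : Tendsto (fun s : ℕ => Real.sqrt (∑' k : ℕ,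
          ‖(inner ℂ (b n) (uop U0 ((k : ℤ) + (s : ℤ)) ψ) : ℂ)‖ ^ 2)) atTop (𝓝 0) := by
        have hc := (Real.continuous_sqrt.tendsto 0).comp h1
        rw [Real.sqrt_zero] at hc
        exact hc.congr fun s => congrArg Real.sqrt (congrFun h2 s).symm
      have h4 := h3.mul_const (K * (M * ‖a n‖))
      simpa using h4
    have hbd : ∀ᶠ s : ℕ in atTop, ∀ n : ℕ,
        ‖Real.sqrt (∑' k : ℕ, ‖(inner ℂ (b n) (uop U0 ((k : ℤ) + (s : ℤ)) ψ) : ℂ)‖ ^ 2)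
          * (K * (M * ‖a n‖))‖ ≤ (K * ‖b n‖) * (K * (M * ‖a n‖)) := by
      apply Eventually.of_forall
      intro s n
      rw [Real.norm_eq_abs, _root_.abs_of_nonneg (by positivity)]
      exact mul_le_mul_of_nonneg_right (g_le (b n) s) (by positivity)
    have h := tendsto_tsum_of_dominated_convergence hboundsum h0 hbd
    simpa [hDdef] using h
  -- conclude
  have hsnd : Tendsto (Prod.snd : ℕ × ℕ → ℕ) atTop atTop := by
    rw [← prod_atTop_atTop_eq]; exact tendsto_snd
  have hfinal := squeeze_zero_norm (fun p : ℕ × ℕ => key p.1 p.2) (hDtend.comp hsnd)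
  have hfeq : (fun p : ℕ × ℕ => ∑' k : ℕ,
      (inner ℂ ((((U0 ^ (k + p.1)) : unitary (E →L[ℂ] E)) : E →L[ℂ] E) ψ)
        (((Q p.1 p.2).comp Y) ((((U0 ^ (k + p.2)) : unitary (E →L[ℂ] E)) : E →L[ℂ] E) ψ)) : ℂ))
      = fun p : ℕ × ℕ => ∑' k : ℕ,
        (inner ℂ (uop U0 ((k : ℤ) + (p.1 : ℤ)) ψ)
          (((Q p.1 p.2).comp Y) (uop U0 ((k : ℤ) + (p.2 : ℤ)) ψ)) : ℂ) := by
    funext p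
    exact tsum_congr fun k => by rw [uop_natCast, uop_natCast, Nat.cast_add, Nat.cast_add]
  rw [hfeq]
  exact hfinal
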